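/- Let T_i(v) = min over d ∈ {0,1,…,D_i} of w_i^d where w_i^0 = c'_i + γ + (α/(1−α))λ(v) with λ(v) = ((1−α)/N)Σ_{k=1}^{N} v_{φ(k)} (φ sorting v increasingly), and w_i^d = c'_i + γ(D_i−d)/D_i + (α/d)Σ_{k=1}^{d} v_{ψ(k)} (ψ sorting v on F_i increasingly). Then T_i(v) equals min_{(σ,ν) ∈ P_i} [c'_i + γ(D_i − Σ_d dσ^d)/D_i + αΣ_j ν_j v_j], i.e., the sort-based evaluation in the MaxRank algorithm computes the dynamic programming operator exactly. -/

import Mathlib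

lemma capped_min (n m c : ℕ) (hm : 1 ≤ m) (v : Fin n → ℝ) (G : Finset (Fin n))
    (hc : c = G.card) (σ : Fin c → Fin n) (hσinj : Function.Injective σ)
    (hσmem : ∀ k, σ k ∈ G) (hmG : m ≤ c)
    (hσsort : ∀ k l, k ≤ l → v (σ k) ≤ v (σ l)) :
    IsLeast ((fun ν : Fin n → ℝ => ∑ j, ν j * v j) ''
      {ν : Fin n → ℝ | (∑ j, ν j) = 1 ∧ (∀ j ∈ G, 0 ≤ ν j ∧ ν j ≤ 1 / (m : ℝ)) ∧ ∀ j ∉ G, ν j = 0})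
      ((1 / (m : ℝ)) * ∑ k : Fin c, if (k : ℕ) < m then v (σ k) else 0) := by
  have hm0 : (0:ℝ) < (m:ℝ) := by exact_mod_cast hm
  -- the set T of the m smallest indices
  set Tk : Finset (Fin c) := Finset.univ.filter (fun k => (k:ℕ) < m) with hTk
  set T : Finset (Fin n) := Tk.image σ with hT
  have hTkcard : Tk.card = m := by
    rw [hTk]
    have : (Finset.univ.filter (fun k : Fin c => (k:ℕ) < m)) =
        (Finset.range m).attachFin (fun a ha => lt_of_lt_of_le (Finset.mem_range.mp ha) hmG) := by
      ext k
      simp [Finset.mem_attachFin]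
    rw [this, Finset.card_attachFin, Finset.card_range]
  have hTcard : T.card = m := by rw [hT, Finset.card_image_of_injective _ hσinj, hTkcard]
  have hTsub : T ⊆ G := by
    intro j hj
    rw [hT] at hj
    obtain ⟨k, _, rfl⟩ := Finset.mem_image.mp hj
    exact hσmem k
  have hsumT : ∑ j ∈ T, v j = ∑ k : Fin c, if (k : ℕ) < m then v (σ k) else 0 := by
    rw [hT, Finset.sum_image (fun a _ b _ h => hσinj h), hTk, Finset.sum_filter]
  -- surjectivity of σ onto G
  have hGeq : Finset.univ.image σ = G := by
    apply Finset.eq_of_subset_of_card_le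
    · intro j hj; obtain ⟨k, _, rfl⟩ := Finset.mem_image.mp hj; exact hσmem k
    · rw [Finset.card_image_of_injective _ hσinj, Finset.card_univ, Fintype.card_fin, ← hc]
  have hsurj : ∀ j ∈ G, ∃ k, σ k = j := by
    intro j hj
    rw [← hGeq] at hj
    obtain ⟨k, _, rfl⟩ := Finset.mem_image.mp hj
    exact ⟨k, rfl⟩
  have hm1 : m - 1 < c := by omega
  set t : ℝ := v (σ ⟨m - 1, hm1⟩) with ht
  constructor
  · -- membership: the greedy point
    refine ⟨fun j => if j ∈ T then 1 / (m:ℝ) else 0, ⟨?_, ?_, ?_⟩, ?_⟩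
    · rw [Finset.sum_ite_mem, Finset.univ_inter, Finset.sum_const, hTcard, nsmul_eq_mul]
      field_simp
    · intro j _
      by_cases hj : j ∈ T <;> simp [hj] <;> positivity
    · intro j hj
      have hjT : j ∉ T := fun h => hj (hTsub h)
      simp [hjT]
    · simp only [ite_mul, zero_mul]
      rw [Finset.sum_ite_mem, Finset.univ_inter, ← Finset.mul_sum, hsumT]
  · -- lower bound
    rintro x ⟨ν, ⟨hsum, hcap, hout⟩, rfl⟩
    -- key inequality
    have key : ∑ j ∈ T, (1 / (m:ℝ)) * (v j - t) ≤ ∑ j, ν j * (v j - t) := by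
      have h1 : ∑ j, ν j * (v j - t) = ∑ j ∈ G, ν j * (v j - t) := by
        rw [← Finset.sum_subset (Finset.subset_univ G)]
        intro j _ hj
        rw [hout j hj, zero_mul]
      rw [h1]
      refine le_trans (Finset.sum_le_sum ?_) (Finset.sum_le_sum_of_subset_of_nonneg hTsub ?_)
      · intro j hj
        obtain ⟨k, hk, rfl⟩ := Finset.mem_image.mp (by rwa [hT] at hj)
        have hk' : (k:ℕ) < m := (Finset.mem_filter.mp hk).2
        have hvt : v (σ k) - t ≤ 0 := by
          have : v (σ k) ≤ t := hσsort k ⟨m-1, hm1⟩ (by simp [Fin.le_def]; omega)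
          linarith
        have hcapk := hcap (σ k) (hσmem k)
        nlinarith [hcapk.1, hcapk.2]
      · intro j hjG hjT
        obtain ⟨k, rfl⟩ := hsurj j hjG
        have hk : ¬ (k:ℕ) < m := by
          intro h
          exact hjT (by rw [hT]; exact Finset.mem_image_of_mem σ (by simp [hTk, h]))
        have hvt : t ≤ v (σ k) := hσsort ⟨m-1, hm1⟩ k (by simp [Fin.le_def]; omega)
        have := (hcap (σ k) (hσmem k)).1
        nlinarith
    have hL : ∑ j ∈ T, (1 / (m:ℝ)) * (v j - t) = (1/(m:ℝ)) * ∑ j ∈ T, v j - t := by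
      rw [← Finset.mul_sum, Finset.sum_sub_distrib, Finset.sum_const, hTcard, nsmul_eq_mul]
      field_simp
    have hR : ∑ j, ν j * (v j - t) = ∑ j, ν j * v j - t := by
      have : ∑ j, ν j * (v j - t) = ∑ j, (ν j * v j - ν j * t) := by
        exact Finset.sum_congr rfl (by intros; ring)
      rw [this, Finset.sum_sub_distrib, ← Finset.sum_mul, hsum, one_mul]
    rw [hL, hR, hsumT] at key
    linarith

set_option maxRecDepth 8000 in
theorem stmt_12 (n N : ℕ) (hn : 1 ≤ n) (hN : 1 ≤ N) (hNn : N ≤ n)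
    (α : ℝ) (hα : 0 ≤ α) (hα1 : α < 1) (γ : ℝ) (hγ : 0 < γ)
    (c' : Fin n → ℝ) (i : Fin n)
    (F : Finset (Fin n)) (D : ℕ) (hD : D = F.card) (hD1 : 1 ≤ D)
    (K : Fin (D + 1) → Set (Fin n → ℝ))
    (hK0 : K 0 = {z : Fin n → ℝ | (∑ j, z j) = 1 ∧ ∀ j, 0 ≤ z j ∧ z j ≤ 1 / N})
    (hKd : ∀ d : Fin (D + 1), 1 ≤ (d : ℕ) →
      K d = {ν : Fin n → ℝ | (∑ j, ν j) = 1 ∧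
        (∀ j ∈ F, 0 ≤ ν j ∧ ν j ≤ 1 / ((d : ℕ) : ℝ)) ∧ (∀ j ∉ F, ν j = 0)})
    (P : Set ((Fin (D + 1) → ℝ) × (Fin n → ℝ)))
    (hP : P = convexHull ℝ (⋃ d : Fin (D + 1),
      ({fun d' => if d' = d then (1 : ℝ) else 0} : Set (Fin (D + 1) → ℝ)) ×ˢ K d))
    (v : Fin n → ℝ)
    (φ : Fin n → Fin n) (hφbij : Function.Bijective φ)
    (hφsort : ∀ k l : Fin n, k ≤ l → v (φ k) ≤ v (φ l))
    (ψ : Fin F.card → Fin n) (hψinj : Function.Injective ψ)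
    (hψrange : ∀ k, ψ k ∈ F)
    (hψsort : ∀ k l : Fin F.card, k ≤ l → v (ψ k) ≤ v (ψ l))
    (lam : ℝ)
    (hlam : lam = ((1 - α) / N) * ∑ k : Fin n, (if (k : ℕ) < N then v (φ k) else 0))
    (w : Fin (D + 1) → ℝ)
    (hw0 : w 0 = c' i + γ + (α / (1 - α)) * lam)
    (hwd : ∀ d : Fin (D + 1), 1 ≤ (d : ℕ) →
      w d = c' i + γ * ((D : ℝ) - (d : ℕ)) / D
        + (α / ((d : ℕ) : ℝ)) * ∑ k : Fin F.card, (if (k : ℕ) < (d : ℕ) then v (ψ k) else 0)) :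
    Finset.univ.inf' Finset.univ_nonempty w =
      sInf ((fun p : (Fin (D + 1) → ℝ) × (Fin n → ℝ) =>
        c' i + γ * ((D : ℝ) - ∑ d : Fin (D + 1), (d.val : ℝ) * p.1 d) / (D : ℝ)
          + α * ∑ j, p.2 j * v j) '' P) := by
  have hD0 : ((D : ℕ) : ℝ) ≠ 0 := Nat.cast_ne_zero.mpr (by omega)
  have hN0 : ((N : ℕ) : ℝ) ≠ 0 := Nat.cast_ne_zero.mpr (by omega)
  have h1α : (1 : ℝ) - α ≠ 0 := by linarith
  set f : (Fin (D + 1) → ℝ) × (Fin n → ℝ) → ℝ := fun p =>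
    c' i + γ * ((D : ℝ) - ∑ d : Fin (D + 1), (d.val : ℝ) * p.1 d) / (D : ℝ)
      + α * ∑ j, p.2 j * v j with hf
  set e : Fin (D + 1) → (Fin (D + 1) → ℝ) :=
    fun d => fun d' => if d' = d then (1 : ℝ) else 0 with he
  -- for each d, an exact minimizer of the linear part over K d
  have key : ∀ d : Fin (D + 1), ∃ ν, ν ∈ K d ∧
      (∀ ν' ∈ K d, ∑ j, ν j * v j ≤ ∑ j, ν' j * v j) ∧
      w d = c' i + γ * ((D : ℝ) - ((d : ℕ) : ℝ)) / (D : ℝ) + α * ∑ j, ν j * v j := by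
    intro d
    rcases Nat.eq_zero_or_pos (d : ℕ) with hd | hd
    · have hd0 : d = 0 := Fin.ext (by simp only [Fin.val_zero]; exact hd)
      subst hd0
      have hcard : n = (Finset.univ : Finset (Fin n)).card := by simp
      have hls := capped_min n N n hN v Finset.univ hcard φ hφbij.injective
        (fun k => Finset.mem_univ _) hNn hφsort
      have hset : {ν : Fin n → ℝ | (∑ j, ν j) = 1 ∧
          (∀ j ∈ (Finset.univ : Finset (Fin n)), 0 ≤ ν j ∧ ν j ≤ 1 / (N : ℝ)) ∧
          ∀ j ∉ (Finset.univ : Finset (Fin n)), ν j = 0} = K 0 := by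
        rw [hK0]; ext z; simp
      rw [hset] at hls
      obtain ⟨⟨ν, hνmem, hνval⟩, hlbd⟩ := hls
      simp only at hνval
      refine ⟨ν, hνmem, ?_, ?_⟩
      · intro ν' hν'
        exact le_of_eq hνval |>.trans (hlbd ⟨ν', hν', rfl⟩)
      · rw [hw0, hlam, hνval]
        simp only [Fin.val_zero, Nat.cast_zero, sub_zero]
        field_simp
    · have hdD : (d : ℕ) ≤ F.card := by
        have := d.isLt; omega
      have hls := capped_min n (d : ℕ) F.card hd v F rfl ψ hψinj hψrange hdD hψsort
      rw [← hKd d hd] at hls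
      obtain ⟨⟨ν, hνmem, hνval⟩, hlbd⟩ := hls
      simp only at hνval
      refine ⟨ν, hνmem, ?_, ?_⟩
      · intro ν' hν'
        exact le_of_eq hνval |>.trans (hlbd ⟨ν', hν', rfl⟩)
      · rw [hwd d hd, hνval]
        have hd0' : ((d : ℕ) : ℝ) ≠ 0 := Nat.cast_ne_zero.mpr (by omega)
        field_simp
  -- value of f on vertices
  have hsum_e : ∀ d : Fin (D + 1),
      ∑ d' : Fin (D + 1), ((d' : ℕ) : ℝ) * e d d' = ((d : ℕ) : ℝ) := by
    intro d
    simp only [he, mul_ite, mul_one, mul_zero]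
    rw [Finset.sum_ite_eq' Finset.univ d]
    simp
  have hfe : ∀ (d : Fin (D + 1)) (ν : Fin n → ℝ),
      f (e d, ν) = c' i + γ * ((D : ℝ) - ((d : ℕ) : ℝ)) / (D : ℝ) + α * ∑ j, ν j * v j := by
    intro d ν
    simp only [hf, hsum_e d]
  set M : ℝ := Finset.univ.inf' Finset.univ_nonempty w with hM
  set S0 : Set ((Fin (D + 1) → ℝ) × (Fin n → ℝ)) := ⋃ d : Fin (D + 1),
    ({fun d' => if d' = d then (1 : ℝ) else 0} : Set (Fin (D + 1) → ℝ)) ×ˢ K d with hS0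
  -- affinity of f
  have haff : ∀ (a b : ℝ) (x y : (Fin (D + 1) → ℝ) × (Fin n → ℝ)), a + b = 1 →
      f (a • x + b • y) = a * f x + b * f y := by
    intro a b x y hab
    have h1 : ∑ d : Fin (D + 1), ((d : ℕ) : ℝ) * (a * x.1 d + b * y.1 d)
        = a * ∑ d : Fin (D + 1), ((d : ℕ) : ℝ) * x.1 d
          + b * ∑ d : Fin (D + 1), ((d : ℕ) : ℝ) * y.1 d := by
      rw [Finset.mul_sum, Finset.mul_sum, ← Finset.sum_add_distrib]
      exact Finset.sum_congr rfl (fun _ _ => by ring)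
    have h2 : ∑ j, (a * x.2 j + b * y.2 j) * v j
        = a * ∑ j, x.2 j * v j + b * ∑ j, y.2 j * v j := by
      rw [Finset.mul_sum, Finset.mul_sum, ← Finset.sum_add_distrib]
      exact Finset.sum_congr rfl (fun _ _ => by ring)
    simp only [hf, Prod.fst_add, Prod.snd_add, Prod.smul_fst, Prod.smul_snd,
      Pi.add_apply, Pi.smul_apply, smul_eq_mul]
    rw [h1, h2]
    linear_combination (-(c' i) - γ * (D : ℝ) / (D : ℝ)) * hab
  -- lower bound on the hull
  have hlb : ∀ p ∈ P, M ≤ f p := by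
    rw [hP]
    intro p hp
    have hsub : S0 ⊆ {q : (Fin (D + 1) → ℝ) × (Fin n → ℝ) | M ≤ f q} := ?_
    rotate_left
    · rintro q hq
      simp only [hS0, Set.mem_iUnion, Set.mem_prod, Set.mem_singleton_iff] at hq
      obtain ⟨d, hq1, hq2⟩ := hq
      obtain ⟨ν, hνmem, hνmin, hνw⟩ := key d
      have hq1' : e d = q.1 := by simp only [he]; exact hq1.symm
      have h1 : f q = f (e d, q.2) := by rw [hq1']
      have h2 : w d ≤ f q := by
        rw [h1, hfe]
        rw [hνw]
        have := mul_le_mul_of_nonneg_left (hνmin q.2 hq2) hα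
        linarith
      exact le_trans (Finset.inf'_le w (Finset.mem_univ d)) h2
    have hconv : Convex ℝ {q : (Fin (D + 1) → ℝ) × (Fin n → ℝ) | M ≤ f q} := ?_
    rotate_left
    · intro x hx y hy a b ha hb hab
      have hfx : M ≤ f x := hx
      have hfy : M ≤ f y := hy
      show M ≤ f (a • x + b • y)
      rw [haff a b x y hab]
      have h3 : a * M + b * M = M := by rw [← add_mul, hab, one_mul]
      nlinarith [mul_le_mul_of_nonneg_left hfx ha, mul_le_mul_of_nonneg_left hfy hb]
    exact convexHull_min hsub hconv hp
  -- each w d is attained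
  have hmem : ∀ d : Fin (D + 1), w d ∈ f '' P := by
    intro d
    obtain ⟨ν, hνmem, _, hνw⟩ := key d
    refine ⟨(e d, ν), ?_, by rw [hfe d ν, ← hνw]⟩
    rw [hP]
    refine subset_convexHull ℝ _ ?_
    rw [hS0]
    exact Set.mem_iUnion.mpr ⟨d, Set.mk_mem_prod rfl hνmem⟩
  have hbdd : BddBelow (f '' P) := ⟨M, by rintro x ⟨p, hp, rfl⟩; exact hlb p hp⟩
  obtain ⟨d0, _, hd0⟩ := Finset.exists_mem_eq_inf' (Finset.univ_nonempty) w
  apply le_antisymm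
  · refine le_csInf ⟨w d0, hmem d0⟩ ?_
    rintro x ⟨p, hp, rfl⟩
    exact hlb p hp
  · calc sInf (f '' P) ≤ w d0 := csInf_le hbdd (hmem d0)
      _ = M := hd0.symm
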